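/- Let S be a finite semigroup that is a left regular band of groups, with idempotent-power map ω. For every idempotent x ∈ S and every s ∈ S: ω s = x if and only if x·s = s, s·x = s, and there exists t ∈ S with x·t = t, t·x = t, s·t = x and t·s = x. (Equivalently, the fiber {s ∈ S : s^ω = x} of the map s ↦ s^ω equals the maximal subgroup of S at x, i.e. the group of units of the monoid x·S·x with identity element x.) -/
import Mathlib


/-- In a finite LRBG, for every idempotent `x` the fiber
`{s : ω s = x}` is exactly the maximal subgroup at `x` (the group of units of
the monoid `x·S·x` with identity `x`). -/
theorem lrbg_omega_fiber_eq_maximal_subgroup {S : Type*} [Semigroup S] [Fintype S] (ω : S → S)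
    (hidem : ∀ s : S, ω s * ω s = ω s)
    (hpow : ∀ s : S, ∃ n : ℕ, ω s = (fun t => t * s)^[n] s)
    (lrbg1 : ∀ s : S, ω s * s = s)
    (lrbg2 : ∀ s t : S, s * t * ω s = s * t) :
    ∀ x s : S, x * x = x →
      (ω s = x ↔
        (x * s = s ∧ s * x = s ∧
          ∃ t : S, x * t = t ∧ t * x = t ∧ s * t = x ∧ t * s = x)) := by
  intro x s hx
  have isucc : ∀ (a b : S) (k : ℕ),
      (fun t => t * a)^[k+1] b = (fun t => t * a)^[k] b * a :=
    fun a b k => Function.iterate_succ_apply' _ k b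
  -- powers of an element commute with the element
  have comm : ∀ (a : S) (k : ℕ),
      a * (fun t => t * a)^[k] a = (fun t => t * a)^[k] a * a := by
    intro a k
    induction k with
    | zero => rfl
    | succ k ih => rw [isucc, ← mul_assoc, ih]
  -- s * ω s = s
  have somega : ∀ a : S, a * ω a = a := by
    intro a
    obtain ⟨n, hn⟩ := hpow a
    have h1 := lrbg1 a
    rw [hn] at h1 ⊢
    rw [comm a n]
    exact h1
  constructor
  · rintro rfl
    refine ⟨lrbg1 s, somega s, ?_⟩
    obtain ⟨n, hn⟩ := hpow s
    -- absorption on the left by ω s of powers starting at ω s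
    have key1 : ∀ k : ℕ, ω s * (fun t => t * s)^[k] (ω s) = (fun t => t * s)^[k] (ω s) := by
      intro k
      induction k with
      | zero => exact hidem s
      | succ k ih => rw [isucc, ← mul_assoc, ih]
    -- shifting: iterating from ω s one extra step equals iterating from s
    have key2 : ∀ k : ℕ, (fun t => t * s)^[k+1] (ω s) = (fun t => t * s)^[k] s := by
      intro k
      induction k with
      | zero => exact lrbg1 s
      | succ k ih => rw [isucc _ _ (k+1), ih, isucc]
    -- powers of s absorb ω s on the right
    have key3 : ∀ k : ℕ, (fun t => t * s)^[k] s * ω s = (fun t => t * s)^[k] s := by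
      intro k
      induction k with
      | zero => exact somega s
      | succ k ih => rw [isucc, ← comm s k, mul_assoc, ih, comm s k]
    -- left multiplication by s
    have key4 : ∀ k : ℕ, s * (fun t => t * s)^[k] (ω s) = (fun t => t * s)^[k] s := by
      intro k
      induction k with
      | zero => exact somega s
      | succ k ih => rw [isucc, isucc, ← mul_assoc, ih]
    refine ⟨(fun t => t * s)^[n] (ω s), key1 n, ?_, ?_, ?_⟩
    · -- t * ω s = t
      cases n with
      | zero => exact hidem s
      | succ k => rw [key2 k]; exact key3 k
    · -- s * t = ω s
      rw [key4 n, ← hn]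
    · -- t * s = ω s
      exact ((Function.iterate_succ_apply' (fun t => t * s) n (ω s)).symm.trans
        ((key2 n).trans hn.symm))
  · rintro ⟨hxs, hsx, t, hxt, htx, hst, hts⟩
    obtain ⟨n, hn⟩ := hpow s
    -- x absorbs powers of s on the left
    have xabs : ∀ k : ℕ, x * (fun u => u * s)^[k] s = (fun u => u * s)^[k] s := by
      intro k
      induction k with
      | zero => exact hxs
      | succ j ih => rw [isucc, ← mul_assoc, ih]
    -- powers of s and powers of t multiply to x
    have inv : ∀ k : ℕ, (fun u => u * s)^[k] s * (fun u => u * t)^[k] t = x := by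
      intro k
      induction k with
      | zero => exact hst
      | succ j ih =>
        rw [isucc, isucc, ← comm s j, mul_assoc, ← mul_assoc ((fun u => u * s)^[j] s),
          ih, hxt, hst]
    -- ω s * x = x
    have h1 : ω s * x = x := by
      have e : ω s * (fun u => u * s)^[n] s = (fun u => u * s)^[n] s := by
        rw [← hn]; exact hidem s
      rw [← inv n, ← mul_assoc, e]
    -- x * ω s = ω s
    have h2 : x * ω s = ω s := by rw [hn]; exact xabs n
    -- ω x = x
    have h3 : ω x = x := by
      obtain ⟨m, hm⟩ := hpow x
      rw [hm]
      clear hm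
      induction m with
      | zero => rfl
      | succ j ih => rw [isucc, ih, hx]
    -- lrbg2 x (ω s) : x * ω s * ω x = x * ω s
    have h4 := lrbg2 x (ω s)
    rw [h3, h2] at h4
    rw [h1] at h4
    exact h4.symm
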